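/- If U is a unitary d×d complex matrix and n ≥ 1, then there exists a unitary matrix V which is a polynomial in U and satisfies V^n = U. -/

import Mathlib

open Matrix BigOperators Polynomial

/-- Permutation symmetry of an `n`-qudit state represented by its amplitudes. -/
def PSym {n d : ℕ} (ψ : (Fin n → Fin d) → ℂ) : Prop :=
  ∀ σ : Equiv.Perm (Fin n), ∀ x : Fin n → Fin d, ψ (x ∘ σ) = ψ x

/-- The operator `B` acting on the `k`-th tensor factor (identity elsewhere). -/
noncomputable def appAt {n d : ℕ} (k : Fin n) (B : Matrix (Fin d) (Fin d) ℂ)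
    (ψ : (Fin n → Fin d) → ℂ) : (Fin n → Fin d) → ℂ :=
  fun x => ∑ j : Fin d, B (x k) j * ψ (Function.update x k j)

/-- The operator `A 1 ⊗ A 2 ⊗ ⋯ ⊗ A n` acting on an `n`-qudit state. -/
noncomputable def appAll {n d : ℕ} (A : Fin n → Matrix (Fin d) (Fin d) ℂ)
    (ψ : (Fin n → Fin d) → ℂ) : (Fin n → Fin d) → ℂ :=
  fun x => ∑ y : Fin n → Fin d, (∏ k, A k (x k) (y k)) * ψ y

open scoped ComplexOrder

lemma myCommute_aeval {R A : Type*} [CommRing R] [Ring A] [Algebra R A]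
    {a b : A} (h : Commute a b) (p : R[X]) : Commute (aeval a p) b := by
  induction p using Polynomial.induction_on' with
  | add p q hp hq => rw [map_add]; exact hp.add_left hq
  | monomial k c =>
      rw [aeval_monomial]
      have hc : Commute (algebraMap R A c) b := Algebra.commutes c b
      exact hc.mul_left (h.pow_left k)

lemma myStar_aeval {d : ℕ} (U : Matrix (Fin d) (Fin d) ℂ) (p : ℂ[X]) :
    star (aeval U p) = aeval (star U) (p.map (starRingEnd ℂ)) := by
  induction p using Polynomial.induction_on' with
  | add p q hp hq => simp [hp, hq, Polynomial.map_add]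
  | monomial k c =>
      rw [aeval_monomial, Polynomial.map_monomial, aeval_monomial, StarMul.star_mul, star_pow]
      rw [Algebra.algebraMap_eq_smul_one, Algebra.algebraMap_eq_smul_one, star_smul, star_one]
      rw [Algebra.smul_mul_assoc, Algebra.mul_smul_comm, one_mul, mul_one]
      rfl

-- conjugation by unitary
lemma myConjPow {d : ℕ} (P A : Matrix (Fin d) (Fin d) ℂ) (h1 : star P * P = 1)
    (h2 : P * star P = 1) (k : ℕ) : (P * A * star P) ^ k = P * A ^ k * star P := by
  induction k with
  | zero => simpa using h2.symm
  | succ k ih =>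
      rw [pow_succ, ih, pow_succ]
      have : star P * (P * (A * star P)) = A * star P := by rw [← mul_assoc, h1, one_mul]
      simp only [mul_assoc, this]



lemma myHermPowZero {d : ℕ} {W : Matrix (Fin d) (Fin d) ℂ} (hW : W.IsHermitian)
    {m : ℕ} (hm : m ≠ 0) (h : W ^ m = 0) : W = 0 := by
  have h1 : star (hW.eigenvectorUnitary : Matrix (Fin d) (Fin d) ℂ) * hW.eigenvectorUnitary = 1 :=
    mem_unitaryGroup_iff'.mp hW.eigenvectorUnitary.2
  have h2 : (hW.eigenvectorUnitary : Matrix (Fin d) (Fin d) ℂ) * star (hW.eigenvectorUnitary : Matrix (Fin d) (Fin d) ℂ) = 1 :=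
    mem_unitaryGroup_iff.mp hW.eigenvectorUnitary.2
  have hspec := hW.spectral_theorem
  rw [Unitary.conjStarAlgAut_apply] at hspec
  have hdm : ((hW.eigenvectorUnitary : Matrix (Fin d) (Fin d) ℂ) * diagonal (RCLike.ofReal ∘ hW.eigenvalues)
      * star (hW.eigenvectorUnitary : Matrix (Fin d) (Fin d) ℂ)) ^ m = 0 := by
    rw [← hspec, h]
  rw [myConjPow _ _ h1 h2, diagonal_pow] at hdm
  have hD := congrArg (fun M => star (hW.eigenvectorUnitary : Matrix (Fin d) (Fin d) ℂ) * M
      * (hW.eigenvectorUnitary : Matrix (Fin d) (Fin d) ℂ)) hdm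
  rw [← mul_assoc, ← mul_assoc, h1, one_mul, mul_assoc, h1, mul_one, mul_zero, zero_mul] at hD
  have hev : ∀ i, hW.eigenvalues i = 0 := by
    intro i
    have h4 := congrFun (congrFun hD i) i
    simp only [diagonal_apply_eq, Pi.pow_apply, Function.comp_apply, Matrix.zero_apply] at h4
    have h5 : (hW.eigenvalues i : ℂ) = 0 := pow_eq_zero_iff hm |>.mp h4
    exact_mod_cast h5
  have hfun : (RCLike.ofReal ∘ hW.eigenvalues : Fin d → ℂ) = fun _ => 0 := by
    funext i; simp [hev i]
  rw [hspec, hfun]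
  simp

lemma myHermPowOne {d : ℕ} {W : Matrix (Fin d) (Fin d) ℂ} (hW : W.IsHermitian)
    (hpsd : W.PosSemidef) {m : ℕ} (hm : m ≠ 0) (h : W ^ m = 1) : W = 1 := by
  have h1 : star (hW.eigenvectorUnitary : Matrix (Fin d) (Fin d) ℂ) * hW.eigenvectorUnitary = 1 :=
    mem_unitaryGroup_iff'.mp hW.eigenvectorUnitary.2
  have h2 : (hW.eigenvectorUnitary : Matrix (Fin d) (Fin d) ℂ) * star (hW.eigenvectorUnitary : Matrix (Fin d) (Fin d) ℂ) = 1 :=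
    mem_unitaryGroup_iff.mp hW.eigenvectorUnitary.2
  have hspec := hW.spectral_theorem
  rw [Unitary.conjStarAlgAut_apply] at hspec
  have hdm : ((hW.eigenvectorUnitary : Matrix (Fin d) (Fin d) ℂ) * diagonal (RCLike.ofReal ∘ hW.eigenvalues)
      * star (hW.eigenvectorUnitary : Matrix (Fin d) (Fin d) ℂ)) ^ m = 1 := by
    rw [← hspec, h]
  rw [myConjPow _ _ h1 h2, diagonal_pow] at hdm
  have hD := congrArg (fun M => star (hW.eigenvectorUnitary : Matrix (Fin d) (Fin d) ℂ) * M
      * (hW.eigenvectorUnitary : Matrix (Fin d) (Fin d) ℂ)) hdm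
  rw [← mul_assoc, ← mul_assoc, h1, one_mul, mul_assoc, h1, mul_one, mul_one, h1] at hD
  have hev : ∀ i, hW.eigenvalues i = 1 := by
    intro i
    have h4 := congrFun (congrFun hD i) i
    simp only [diagonal_apply_eq, Pi.pow_apply, Function.comp_apply, Matrix.one_apply_eq] at h4
    rw [← RCLike.ofReal_pow] at h4
    have h5 : (hW.eigenvalues i) ^ m = 1 := by
      have := (RCLike.ofReal_inj (K := ℂ)).mp (h4.trans (RCLike.ofReal_one).symm)
      exact this
    have hge := hpsd.eigenvalues_nonneg i
    rcases lt_trichotomy (hW.eigenvalues i) 1 with hlt | he | hgt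
    · have := pow_lt_one₀ hge hlt hm; rw [h5] at this; exact absurd this (lt_irrefl 1)
    · exact he
    · have := one_lt_pow₀ hgt hm; rw [h5] at this; exact absurd this (lt_irrefl 1)
  have hfun : (RCLike.ofReal ∘ hW.eigenvalues : Fin d → ℂ) = fun _ => 1 := by
    funext i; simp [hev i]
  rw [hspec, hfun]
  simp [h2]


theorem stmt_10 {d : ℕ} (U : Matrix (Fin d) (Fin d) ℂ)
    (hU : U ∈ Matrix.unitaryGroup (Fin d) ℂ) (n : ℕ) (hn : 1 ≤ n) :
    ∃ V : Matrix (Fin d) (Fin d) ℂ, V ∈ Matrix.unitaryGroup (Fin d) ℂ ∧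
      (∃ f : Polynomial ℂ, V = Polynomial.aeval U f) ∧ V ^ n = U := by
  classical
  rcases Nat.eq_zero_or_pos d with hd | hd
  · subst hd
    exact ⟨U, hU, ⟨X, (aeval_X U).symm⟩, by ext i j; exact i.elim0⟩
  have hd' : d ≠ 0 := hd.ne'
  have hn0 : 0 < n := hn
  have h1 : star U * U = 1 := mem_unitaryGroup_iff'.mp hU
  have h2 : U * star U = 1 := mem_unitaryGroup_iff.mp hU
  have hcomm : Commute U (star U) := by unfold Commute SemiconjBy; rw [h1, h2]
  set r : ℂ → ℂ := fun z => Classical.choose (IsAlgClosed.exists_pow_nat_eq z hn0) with hr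
  have hrpow : ∀ z : ℂ, (r z) ^ n = z := fun z =>
    Classical.choose_spec (IsAlgClosed.exists_pow_nat_eq z hn0)
  set S : Finset ℂ := (charpoly U).roots.toFinset with hS
  set f : ℂ[X] := Lagrange.interpolate S id r with hf
  have hinj : Set.InjOn id (S : Set ℂ) := fun a _ b _ h => h
  have hfeval : ∀ z ∈ S, eval z f = r z := fun z hz =>
    Lagrange.eval_interpolate_at_node r hinj hz
  set g : ℂ[X] := f ^ n - X with hg
  have hgroot : ∀ z ∈ S, IsRoot g z := by
    intro z hz
    simp [hg, IsRoot, eval_sub, eval_pow, hfeval z hz, hrpow z]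
  set P : ℂ[X] := (S.val.map fun a => X - C a).prod with hPdef
  have hPdvd : P ∣ g := by
    rcases eq_or_ne g 0 with h0 | h0
    · simp [h0]
    · refine (Multiset.prod_X_sub_C_dvd_iff_le_roots h0 S.val).mpr ?_
      refine Multiset.le_iff_count.mpr fun a => ?_
      by_cases ha : a ∈ S.val
      · have hc1 : S.val.count a = 1 := Multiset.count_eq_one_of_mem S.nodup ha
        have hmem : a ∈ g.roots := by
          rw [Polynomial.mem_roots h0]
          exact hgroot a ha
        rw [hc1]
        exact Multiset.count_pos.mpr hmem
      · simp [Multiset.count_eq_zero_of_notMem ha]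
  have hchar : charpoly U ∣ P ^ d := by
    have hsplit : charpoly U = ((charpoly U).roots.map fun a => X - C a).prod :=
      (IsAlgClosed.splits _).eq_prod_roots_of_monic (charpoly_monic U)
    have hle : (charpoly U).roots ≤ d • S.val := by
      refine Multiset.le_iff_count.mpr fun a => ?_
      by_cases ha : a ∈ (charpoly U).roots
      · have h5 : a ∈ S.val := Multiset.mem_toFinset.mpr ha
        have h6 : (charpoly U).roots.count a ≤ d := by
          refine (Multiset.count_le_card a _).trans ?_
          refine (Polynomial.card_roots' (charpoly U)).trans ?_
          simp [charpoly_natDegree_eq_dim]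
        have h7 : (d • S.val).count a = d * S.val.count a := by
          simp [Multiset.count_nsmul]
        rw [h7, Multiset.count_eq_one_of_mem S.nodup h5, mul_one]
        exact h6
      · simp [Multiset.count_eq_zero_of_notMem ha]
    have hdvd2 : (((charpoly U).roots).map fun a => X - C a).prod ∣
        ((d • S.val).map fun a => X - C a).prod :=
      Multiset.prod_dvd_prod_of_le (Multiset.map_le_map hle)
    rw [Multiset.map_nsmul, Multiset.prod_nsmul] at hdvd2
    rw [hsplit]
    exact hdvd2
  have hPd : (aeval U P) ^ d = 0 := by
    obtain ⟨q, hq⟩ := hchar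
    rw [← map_pow, hq, _root_.map_mul, aeval_self_charpoly, zero_mul]
  have hN0 : aeval U P = 0 := by
    have hNcomm : Commute (aeval U P) (star (aeval U P)) := by
      rw [myStar_aeval]
      exact (myCommute_aeval (myCommute_aeval hcomm P).symm _).symm
    have hH : (star (aeval U P) * aeval U P) ^ d = 0 := by
      rw [hNcomm.symm.mul_pow, ← star_pow, hPd, star_zero, zero_mul]
    have hHher : (star (aeval U P) * aeval U P).IsHermitian := by
      rw [Matrix.star_eq_conjTranspose]
      exact (posSemidef_conjTranspose_mul_self _).isHermitian
    have h8 := myHermPowZero hHher hd' hH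
    rw [Matrix.star_eq_conjTranspose] at h8
    exact Matrix.conjTranspose_mul_self_eq_zero.mp h8
  set V := aeval U f with hV
  have hVn : V ^ n = U := by
    obtain ⟨q, hq⟩ := hPdvd
    have h9 : aeval U g = 0 := by rw [hq, _root_.map_mul, hN0, zero_mul]
    rw [hg, map_sub, map_pow, aeval_X, sub_eq_zero] at h9
    exact h9
  have hVcomm : Commute V (star V) := by
    rw [hV, myStar_aeval]
    exact (myCommute_aeval (myCommute_aeval hcomm f).symm _).symm
  have hWpow : (star V * V) ^ n = 1 := by
    rw [hVcomm.symm.mul_pow, ← star_pow, hVn, h1]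
  have hWher : (star V * V).IsHermitian := by
    rw [Matrix.star_eq_conjTranspose]
    exact (posSemidef_conjTranspose_mul_self _).isHermitian
  have hWpsd : (star V * V).PosSemidef := by
    rw [Matrix.star_eq_conjTranspose]
    exact posSemidef_conjTranspose_mul_self _
  have hW1 : star V * V = 1 := myHermPowOne hWher hWpsd hn0.ne' hWpow
  exact ⟨V, mem_unitaryGroup_iff'.mpr hW1, ⟨f, rfl⟩, hVn⟩
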